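/- For every natural number n, all complex roots of the n-th (probabilists') Hermite polynomial Heₙ are real: if z ∈ ℂ and Heₙ(z) = 0 then Im(z) = 0. -/
import Mathlib


open Complex Polynomial


theorem deriv_hermite (n : ℕ) :
    derivative (hermite (n+1)) = (n+1 : ℕ) • hermite n := by
  induction n with
  | zero => simp [hermite_one, hermite_zero]
  | succ n ih =>
    rw [hermite_succ (n+1), derivative_sub, derivative_mul, derivative_X, ih, derivative_smul,
      hermite_succ n, smul_sub]
    simp only [succ_nsmul, add_smul, one_smul, smul_sub]
    ring

noncomputable def H (n : ℕ) (x : ℂ) : ℂ := aeval x (hermite n)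

theorem H_rec (n : ℕ) (x : ℂ) : H (n+2) x = x * H (n+1) x - (n+1 : ℂ) * H n x := by
  rw [H, hermite_succ (n+1), deriv_hermite n, map_sub, map_mul, aeval_X, map_nsmul, H, H]
  push_cast [nsmul_eq_mul]
  ring

theorem CD (n : ℕ) (x y : ℂ) :
    H (n+1) x * H n y - H n x * H (n+1) y
      = (x - y) * ∑ k ∈ Finset.range (n+1),
          ((n.factorial : ℂ)/(k.factorial : ℂ)) * H k x * H k y := by
  induction n with
  | zero => simp [H, hermite_one, hermite_zero]
  | succ n ih =>
    have hne : (((n+1).factorial : ℕ) : ℂ) ≠ 0 := Nat.cast_ne_zero.mpr (Nat.factorial_ne_zero _)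
    have hsum : ∑ k ∈ Finset.range (n+1), (((n+1).factorial : ℂ)/(k.factorial : ℂ)) * H k x * H k y
        = (n+1 : ℂ) * ∑ k ∈ Finset.range (n+1), ((n.factorial : ℂ)/(k.factorial : ℂ)) * H k x * H k y := by
      rw [Finset.mul_sum]
      refine Finset.sum_congr rfl fun k _ => ?_
      push_cast [Nat.factorial_succ]
      ring
    rw [H_rec, H_rec, Finset.sum_range_succ, hsum, div_self hne]
    linear_combination ((n:ℂ)+1) * ih

theorem H_conj (k : ℕ) (z : ℂ) : H k ((starRingEnd ℂ) z) = (starRingEnd ℂ) (H k z) :=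
  aeval_algHom_apply ((starRingEnd ℂ).toIntAlgHom) z (hermite k)

/-- All complex roots of the probabilists' Hermite polynomials are real. -/
theorem stmt_16 (n : ℕ) (z : ℂ)
    (hz : Polynomial.aeval z (Polynomial.hermite n) = 0) :
    z.im = 0 := by
  rcases n with _ | m
  · simp [hermite_zero] at hz
  · set y := (starRingEnd ℂ) z with hy
    have hz1 : H (m+1) z = 0 := hz
    have hz2 : H (m+1) y = 0 := by rw [hy, H_conj, hz1, map_zero]
    have hcd := CD m z y
    rw [hz1, hz2, zero_mul, mul_zero, sub_zero] at hcd
    set S := ∑ k ∈ Finset.range (m+1),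
        ((m.factorial : ℂ)/(k.factorial : ℂ)) * H k z * H k y with hSdef
    have hre : S.re = ∑ k ∈ Finset.range (m+1),
        ((m.factorial : ℝ)/(k.factorial : ℝ)) * Complex.normSq (H k z) := by
      rw [hSdef, Complex.re_sum]
      refine Finset.sum_congr rfl fun k _ => ?_
      rw [mul_assoc, hy, H_conj, Complex.mul_conj]
      have : ((m.factorial : ℂ)/(k.factorial : ℂ)) =
          (((m.factorial : ℝ)/(k.factorial : ℝ) : ℝ) : ℂ) := by push_cast; ring
      rw [this, ← Complex.ofReal_mul, Complex.ofReal_re]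
    have hpos : 0 < S.re := by
      rw [hre]
      apply Finset.sum_pos' (fun k _ => mul_nonneg (by positivity) (Complex.normSq_nonneg _))
      refine ⟨0, Finset.mem_range.mpr (Nat.succ_pos m), ?_⟩
      have h0 : H 0 z = 1 := by simp [H, hermite_zero]
      rw [h0]
      simp only [Nat.factorial_zero, Nat.cast_one, div_one, map_one]
      rw [mul_one]
      exact_mod_cast Nat.cast_pos.mpr m.factorial_pos
    have hSne : S ≠ 0 := fun h => by simp [h] at hpos
    have hzy : z - y = 0 := by
      rcases mul_eq_zero.mp hcd.symm with h | h
      · exact h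
      · exact absurd h hSne
    have : (starRingEnd ℂ) z = z := by rw [← hy]; linear_combination -hzy
    exact (Complex.conj_eq_iff_im.mp this)
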